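/- The element z lies in K, is central in K, and the quotient of K by the subgroup generated by z is isomorphic to the free abelian group ℤ³⁴; thus K is a central extension of ℤ³⁴ by ℤ. -/

import Mathlib

/-- Generators of the group `H`: `x i`, `y i` for `i : Fin 18`, and `z`. -/
inductive HGen : Type
  | x : Fin 18 → HGen
  | y : Fin 18 → HGen
  | z : HGen

/-- The free-group generator corresponding to `x i`. -/
def fx (i : Fin 18) : FreeGroup HGen := FreeGroup.of (HGen.x i)
/-- The free-group generator corresponding to `y i`. -/
def fy (i : Fin 18) : FreeGroup HGen := FreeGroup.of (HGen.y i)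
/-- The free-group generator corresponding to `z`. -/
def fz : FreeGroup HGen := FreeGroup.of HGen.z

/-- The relations of the presentation of `H`:
`[xᵢ, xⱼ] = [yᵢ, yⱼ] = [xᵢ, yⱼ] = 1` for `i ≠ j`, `[xᵢ, yᵢ] = z`,
and `z` commutes with all the generators. -/
def HRels : Set (FreeGroup HGen) :=
  { r | (∃ i j : Fin 18, i ≠ j ∧ r = fx i * fx j * (fx i)⁻¹ * (fx j)⁻¹)
      ∨ (∃ i j : Fin 18, i ≠ j ∧ r = fy i * fy j * (fy i)⁻¹ * (fy j)⁻¹)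
      ∨ (∃ i j : Fin 18, i ≠ j ∧ r = fx i * fy j * (fx i)⁻¹ * (fy j)⁻¹)
      ∨ (∃ i : Fin 18, r = fx i * fy i * (fx i)⁻¹ * (fy i)⁻¹ * fz⁻¹)
      ∨ (∃ i : Fin 18, r = fx i * fz * (fx i)⁻¹ * fz⁻¹)
      ∨ (∃ i : Fin 18, r = fy i * fz * (fy i)⁻¹ * fz⁻¹) }

/-- The group `H`, given by the above presentation. -/
abbrev Hgrp : Type := PresentedGroup HRels

/-- The generator `xᵢ` of `H`. -/
def xH (i : Fin 18) : Hgrp := PresentedGroup.of (HGen.x i)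
/-- The generator `yᵢ` of `H`. -/
def yH (i : Fin 18) : Hgrp := PresentedGroup.of (HGen.y i)
/-- The generator `z` of `H`. -/
def zH : Hgrp := PresentedGroup.of HGen.z


/-- The element `z` lies in `K = ker(ab)`, is central in `K`, and the quotient
of `K` by the subgroup generated by `z` is isomorphic to the free abelian group
`ℤ³⁴`; thus `K` is a central extension of `ℤ³⁴` by `ℤ`. -/

lemma mk_rel {r : FreeGroup HGen} (h : r ∈ HRels) : PresentedGroup.mk HRels r = 1 :=
  (QuotientGroup.eq_one_iff r).mpr (Subgroup.subset_normalClosure h)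

lemma comm_of_rel {a b : Hgrp} (h : a * b * a⁻¹ * b⁻¹ = 1) : Commute a b := by
  have : a * b = (a * b * a⁻¹ * b⁻¹) * (b * a) := by group
  rw [h, one_mul] at this
  exact this

lemma xx_comm {i j : Fin 18} (h : i ≠ j) : Commute (xH i) (xH j) := by
  apply comm_of_rel
  have := mk_rel (Or.inl ⟨i, j, h, rfl⟩)
  simp only [map_mul, map_inv] at this; exact this

lemma yy_comm {i j : Fin 18} (h : i ≠ j) : Commute (yH i) (yH j) := by
  apply comm_of_rel
  have := mk_rel (Or.inr (Or.inl ⟨i, j, h, rfl⟩))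
  simp only [map_mul, map_inv] at this; exact this

lemma xy_comm {i j : Fin 18} (h : i ≠ j) : Commute (xH i) (yH j) := by
  apply comm_of_rel
  have := mk_rel (Or.inr (Or.inr (Or.inl ⟨i, j, h, rfl⟩)))
  simp only [map_mul, map_inv] at this; exact this

lemma xz_comm (i : Fin 18) : Commute (xH i) zH := by
  apply comm_of_rel
  have := mk_rel (Or.inr (Or.inr (Or.inr (Or.inr (Or.inl ⟨i, rfl⟩)))))
  simp only [map_mul, map_inv] at this; exact this

lemma yz_comm (i : Fin 18) : Commute (yH i) zH := by
  apply comm_of_rel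
  have := mk_rel (Or.inr (Or.inr (Or.inr (Or.inr (Or.inr ⟨i, rfl⟩)))))
  simp only [map_mul, map_inv] at this; exact this

lemma xy_rel (i : Fin 18) : xH i * yH i = zH * (yH i * xH i) := by
  have E : xH i * yH i * (xH i)⁻¹ * (yH i)⁻¹ * zH⁻¹ = 1 := by
    have := mk_rel (Or.inr (Or.inr (Or.inr (Or.inl ⟨i, rfl⟩))))
    simp only [map_mul, map_inv] at this; exact this
  have : xH i * yH i = (xH i * yH i * (xH i)⁻¹ * (yH i)⁻¹ * zH⁻¹) * (zH * (yH i * xH i)) := by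
    group
  rw [E, one_mul] at this
  exact this

lemma z_commute (h : Hgrp) : Commute zH h := by
  have : h ∈ Subgroup.centralizer {zH} := by
    apply PresentedGroup.generated_by
    intro g
    rw [Subgroup.mem_centralizer_iff]
    rintro w rfl
    cases g with
    | x i => exact ((xz_comm i).symm).eq
    | y i => exact ((yz_comm i).symm).eq
    | z => rfl
  exact Subgroup.mem_centralizer_iff.mp this zH rfl

lemma central_swap (m : ℤ) (u : Hgrp) : zH ^ m * u = u * zH ^ m :=
  ((z_commute u).zpow_left m).eq

/-- `u` and `v` commute up to a central power of `z`. -/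
def Rrel (u v : Hgrp) : Prop := ∃ m : ℤ, u * v = zH ^ m * (v * u)

lemma Rrel.symm {u v : Hgrp} : Rrel u v → Rrel v u := by
  rintro ⟨m, hm⟩
  exact ⟨-m, by rw [hm]; group⟩

lemma Rrel.of_commute {u v : Hgrp} (h : Commute u v) : Rrel u v :=
  ⟨0, by rw [zpow_zero, one_mul, h.eq]⟩

lemma Rrel.mul_left {u u' v : Hgrp} (h : Rrel u v) (h' : Rrel u' v) : Rrel (u * u') v := by
  obtain ⟨m, hm⟩ := h
  obtain ⟨m', hm'⟩ := h'
  refine ⟨m + m', ?_⟩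
  calc u * u' * v = u * (zH ^ m' * (v * u')) := by rw [mul_assoc, hm']
    _ = (zH ^ m' * u) * (v * u') := by rw [central_swap m' u]; group
    _ = zH ^ m' * ((u * v) * u') := by group
    _ = zH ^ m' * ((zH ^ m * (v * u)) * u') := by rw [hm]
    _ = zH ^ (m + m') * (v * (u * u')) := by group

lemma Rrel.inv_left {u v : Hgrp} (h : Rrel u v) : Rrel u⁻¹ v := by
  obtain ⟨m, hm⟩ := h
  have hv : v * u = zH ^ (-m) * (u * v) := by rw [hm]; group
  refine ⟨-m, ?_⟩
  calc u⁻¹ * v = u⁻¹ * (v * u) * u⁻¹ := by group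
    _ = u⁻¹ * (zH ^ (-m) * (u * v)) * u⁻¹ := by rw [hv]
    _ = (u⁻¹ * zH ^ (-m)) * ((u * v) * u⁻¹) := by group
    _ = (zH ^ (-m) * u⁻¹) * ((u * v) * u⁻¹) := by rw [central_swap (-m) u⁻¹]
    _ = zH ^ (-m) * (v * u⁻¹) := by group

lemma Rrel.mul_right {u v v' : Hgrp} (h : Rrel u v) (h' : Rrel u v') : Rrel u (v * v') :=
  (Rrel.mul_left h.symm h'.symm).symm

lemma Rrel.inv_right {u v : Hgrp} (h : Rrel u v) : Rrel u v⁻¹ :=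
  h.symm.inv_left.symm

lemma Rrel_gen (g : HGen) (g' : HGen) : Rrel (PresentedGroup.of g) (PresentedGroup.of g') := by
  cases g with
  | x i =>
    cases g' with
    | x j =>
      rcases eq_or_ne i j with rfl | h
      · exact Rrel.of_commute (Commute.refl _)
      · exact Rrel.of_commute (xx_comm h)
    | y j =>
      rcases eq_or_ne i j with rfl | h
      · exact ⟨1, by rw [zpow_one]; exact xy_rel i⟩
      · exact Rrel.of_commute (xy_comm h)
    | z => exact Rrel.of_commute (xz_comm i)
  | y i =>
    cases g' with
    | x j =>
      rcases eq_or_ne j i with rfl | h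
      · exact Rrel.symm ⟨1, by rw [zpow_one]; exact xy_rel j⟩
      · exact (Rrel.of_commute (xy_comm h)).symm
    | y j =>
      rcases eq_or_ne i j with rfl | h
      · exact Rrel.of_commute (Commute.refl _)
      · exact Rrel.of_commute (yy_comm h)
    | z => exact Rrel.of_commute (yz_comm i)
  | z => exact (Rrel.of_commute (z_commute _))

lemma Rrel_of_all (g : HGen) (v : Hgrp) : Rrel (PresentedGroup.of g) v := by
  have : v ∈ (⟨⟨⟨{v | Rrel (PresentedGroup.of g) v}, fun h h' => Rrel.mul_right h h'⟩,
      ⟨0, by group⟩⟩, fun h => Rrel.inv_right h⟩ : Subgroup Hgrp) := by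
    apply PresentedGroup.generated_by
    intro g'
    exact Rrel_gen g g'
  exact this

lemma Rrel_all (u v : Hgrp) : Rrel u v := by
  have : u ∈ (⟨⟨⟨{u | ∀ v, Rrel u v}, fun h h' v => Rrel.mul_left (h v) (h' v)⟩,
      fun v => ⟨0, by group⟩⟩, fun h v => Rrel.inv_left (h v)⟩ : Subgroup Hgrp) := by
    apply PresentedGroup.generated_by
    intro g
    exact Rrel_of_all g
  exact this v

abbrev Ab2 : Type := Multiplicative (Fin 18 → ℤ) × Multiplicative (Fin 18 → ℤ)

def qf : HGen → Ab2
  | .x i => (Multiplicative.ofAdd (Pi.single i 1), 1)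
  | .y i => (1, Multiplicative.ofAdd (Pi.single i 1))
  | .z => 1

lemma comm_rel_one {G : Type*} [CommGroup G] (a b : G) : a * b * a⁻¹ * b⁻¹ = 1 := by
  rw [mul_comm a b]; group

lemma qf_rels : ∀ r ∈ HRels, FreeGroup.lift qf r = 1 := by
  rintro r (⟨i,j,hij,rfl⟩|⟨i,j,hij,rfl⟩|⟨i,j,hij,rfl⟩|⟨i,rfl⟩|⟨i,rfl⟩|⟨i,rfl⟩) <;>
    simp only [fx, fy, fz, map_mul, map_inv, FreeGroup.lift_apply_of, qf] <;>
    rw [comm_rel_one] <;> simp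

def qH : Hgrp →* Ab2 := PresentedGroup.toGroup qf_rels

lemma qH_x (i : Fin 18) : qH (xH i) = (Multiplicative.ofAdd (Pi.single i 1), 1) :=
  PresentedGroup.toGroup.of qf_rels

lemma qH_y (i : Fin 18) : qH (yH i) = (1, Multiplicative.ofAdd (Pi.single i 1)) :=
  PresentedGroup.toGroup.of qf_rels

lemma qH_z : qH zH = 1 := PresentedGroup.toGroup.of qf_rels

lemma hxPairwise : Pairwise fun i j : Fin 18 =>
    ∀ m n : Multiplicative ℤ, Commute (zpowersHom Hgrp (xH i) m) (zpowersHom Hgrp (xH j) n) :=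
  fun _ _ hij _ _ => (xx_comm hij).zpow_zpow _ _

lemma hyPairwise : Pairwise fun i j : Fin 18 =>
    ∀ m n : Multiplicative ℤ, Commute (zpowersHom Hgrp (yH i) m) (zpowersHom Hgrp (yH j) n) :=
  fun _ _ hij _ _ => (yy_comm hij).zpow_zpow _ _

def Xh : (Fin 18 → Multiplicative ℤ) →* Hgrp :=
  MonoidHom.noncommPiCoprod (fun i => zpowersHom Hgrp (xH i)) hxPairwise

def Yh : (Fin 18 → Multiplicative ℤ) →* Hgrp :=
  MonoidHom.noncommPiCoprod (fun i => zpowersHom Hgrp (yH i)) hyPairwise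

def Xa (a : Fin 18 → ℤ) : Hgrp := Xh fun i => Multiplicative.ofAdd (a i)
def Ya (b : Fin 18 → ℤ) : Hgrp := Yh fun i => Multiplicative.ofAdd (b i)

lemma funext_single (i : Fin 18) (n : ℤ) :
    (fun j => Multiplicative.ofAdd ((Pi.single i n : Fin 18 → ℤ) j))
      = Pi.mulSingle (M := fun _ : Fin 18 => Multiplicative ℤ) i (Multiplicative.ofAdd n) := by
  funext j
  rcases eq_or_ne j i with rfl | h
  · simp
  · simp [Pi.single_eq_of_ne h, Pi.mulSingle_eq_of_ne h]

lemma Xa_single (i : Fin 18) (n : ℤ) : Xa (Pi.single i n) = xH i ^ n := by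
  rw [Xa, funext_single, Xh, MonoidHom.noncommPiCoprod_mulSingle, zpowersHom_apply, toAdd_ofAdd]

lemma Ya_single (i : Fin 18) (n : ℤ) : Ya (Pi.single i n) = yH i ^ n := by
  rw [Ya, funext_single, Yh, MonoidHom.noncommPiCoprod_mulSingle, zpowersHom_apply, toAdd_ofAdd]

lemma Xa_add (a a' : Fin 18 → ℤ) : Xa (a + a') = Xa a * Xa a' := by
  rw [Xa, Xa, Xa, ← map_mul]
  congr 1

lemma Ya_add (b b' : Fin 18 → ℤ) : Ya (b + b') = Ya b * Ya b' := by
  rw [Ya, Ya, Ya, ← map_mul]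
  congr 1

lemma Xa_zero : Xa 0 = 1 := by
  rw [Xa]; exact map_one Xh

lemma Ya_zero : Ya 0 = 1 := by
  rw [Ya]; exact map_one Yh

lemma CS (m : ℤ) (u v : Hgrp) : u * (zH ^ m * v) = zH ^ m * (u * v) := by
  rw [← mul_assoc, ← central_swap m u, mul_assoc]

/-- Normal form for elements of `Hgrp`. -/
lemma normal_form (h : Hgrp) : ∃ (a b : Fin 18 → ℤ) (c : ℤ),
    h = zH ^ c * Xa a * Ya b ∧ qH h = (Multiplicative.ofAdd a, Multiplicative.ofAdd b) := by
  let S : Subgroup Hgrp :=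
  { carrier := {h | ∃ (a b : Fin 18 → ℤ) (c : ℤ),
      h = zH ^ c * Xa a * Ya b ∧ qH h = (Multiplicative.ofAdd a, Multiplicative.ofAdd b)}
    one_mem' := ⟨0, 0, 0, by rw [Xa_zero, Ya_zero]; group, by simp; rfl⟩
    mul_mem' := by
      rintro h h' ⟨a, b, c, rfl, hq⟩ ⟨a', b', c', rfl, hq'⟩
      obtain ⟨m, hm⟩ := Rrel_all (Ya b) (Xa a')
      have hm_chain : ∀ w : Hgrp, Ya b * (Xa a' * w) = zH ^ m * (Xa a' * (Ya b * w)) := by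
        intro w
        rw [← mul_assoc, hm, mul_assoc, mul_assoc]
      refine ⟨a + a', b + b', c + c' + m, ?_, ?_⟩
      · rw [Xa_add, Ya_add]
        simp only [mul_assoc]
        rw [CS c' (Ya b) (Xa a' * Ya b'), CS c' (Xa a) _, hm_chain (Ya b'), CS m (Xa a) _]
        group
      · rw [map_mul, hq, hq', Prod.mk_mul_mk, ← ofAdd_add, ← ofAdd_add]
    inv_mem' := by
      rintro h ⟨a, b, c, rfl, hq⟩
      obtain ⟨m, hm⟩ := Rrel_all (Ya (-b)) (Xa a)
      have hm_chain : ∀ w : Hgrp, Ya (-b) * (Xa a * w) = zH ^ m * (Xa a * (Ya (-b) * w)) := by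
        intro w
        rw [← mul_assoc, hm, mul_assoc, mul_assoc]
      refine ⟨-a, -b, -(c + m), ?_, ?_⟩
      · have key : zH ^ (-(c + m)) * Xa (-a) * Ya (-b) * (zH ^ c * Xa a * Ya b) = 1 := by
          simp only [mul_assoc]
          rw [CS c (Ya (-b)) (Xa a * Ya b), CS c (Xa (-a)) _, hm_chain (Ya b),
            CS m (Xa (-a)) _]
          have hXX : ∀ v : Hgrp, Xa (-a) * (Xa a * v) = v := by
            intro v
            rw [← mul_assoc, ← Xa_add, neg_add_cancel, Xa_zero, one_mul]
          rw [hXX, ← Ya_add, neg_add_cancel, Ya_zero]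
          group
        exact inv_eq_of_mul_eq_one_left key
      · rw [map_inv, hq, Prod.inv_mk, ← ofAdd_neg, ← ofAdd_neg]
    }
  have hmem : h ∈ S := by
    apply PresentedGroup.generated_by
    intro g
    cases g with
    | x i =>
      refine ⟨Pi.single i 1, 0, 0, ?_, ?_⟩
      · rw [Xa_single, Ya_zero, zpow_zero, zpow_one, one_mul, mul_one]; rfl
      · rw [show PresentedGroup.of (HGen.x i) = xH i from rfl, qH_x]
        simp
    | y i =>
      refine ⟨0, Pi.single i 1, 0, ?_, ?_⟩
      · rw [Ya_single, Xa_zero, zpow_zero, zpow_one, one_mul, one_mul]; rfl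
      · rw [show PresentedGroup.of (HGen.y i) = yH i from rfl, qH_y]
        simp
    | z =>
      refine ⟨0, 0, 1, ?_, ?_⟩
      · rw [Xa_zero, Ya_zero, zpow_one, mul_one, mul_one]; rfl
      · rw [show PresentedGroup.of HGen.z = zH from rfl, qH_z]
        simp; rfl
  exact hmem

def sHom : Ab2 →* Multiplicative (ℤ × ℤ) where
  toFun p := Multiplicative.ofAdd (∑ i, Multiplicative.toAdd p.1 i, ∑ i, Multiplicative.toAdd p.2 i)
  map_one' := by simp
  map_mul' p q := by
    simp only [Prod.fst_mul, Prod.snd_mul, toAdd_mul, Pi.add_apply, Finset.sum_add_distrib,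
      ← ofAdd_add, Prod.mk_add_mk]

def dropFun (p : Ab2) : Fin 34 → ℤ := fun j =>
  if h : (j : ℕ) < 17 then Multiplicative.toAdd p.1 ⟨(j : ℕ), by omega⟩
  else Multiplicative.toAdd p.2 ⟨(j : ℕ) - 17, by omega⟩

def dropHom : Ab2 →* Multiplicative (Fin 34 → ℤ) where
  toFun p := Multiplicative.ofAdd (dropFun p)
  map_one' := by
    refine congrArg Multiplicative.ofAdd ?_
    funext j
    by_cases h : (j : ℕ) < 17 <;> simp [dropFun, h]
  map_mul' p q := by
    simp only [← ofAdd_add]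
    refine congrArg Multiplicative.ofAdd ?_
    funext j
    by_cases h : (j : ℕ) < 17 <;>
      simp [dropFun, h, Prod.fst_mul, Prod.snd_mul, toAdd_mul, Pi.add_apply]

lemma dropHom_apply (p : Ab2) : dropHom p = Multiplicative.ofAdd (dropFun p) := rfl

def genH (j : Fin 34) : Hgrp :=
  if h : (j : ℕ) < 17 then xH ⟨(j : ℕ), by omega⟩ * (xH 17)⁻¹
  else yH ⟨(j : ℕ) - 17, by omega⟩ * (yH 17)⁻¹

lemma drop_gen (j : Fin 34) :
    dropHom (qH (genH j)) = Multiplicative.ofAdd (Pi.single j 1) := by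
  have h17 : ((17 : Fin 18) : ℕ) = 17 := rfl
  rw [genH]
  split_ifs with h
  · rw [map_mul, map_inv, qH_x, qH_x, dropHom_apply]
    refine congrArg Multiplicative.ofAdd ?_
    funext j'
    have h34 := j'.isLt
    by_cases h' : (j' : ℕ) < 17 <;>
      simp only [dropFun, dif_pos, dif_neg, h', Prod.fst_mul, Prod.fst_inv, Prod.snd_mul,
        Prod.snd_inv, toAdd_mul, toAdd_inv, toAdd_ofAdd, toAdd_one, Pi.add_apply, Pi.neg_apply,
        Pi.zero_apply, Pi.single_apply, Fin.ext_iff, h17] <;>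
      split_ifs <;> first | omega | simp_all
  · rw [map_mul, map_inv, qH_y, qH_y, dropHom_apply]
    refine congrArg Multiplicative.ofAdd ?_
    funext j'
    have h34 := j'.isLt
    have h34' := j.isLt
    by_cases h' : (j' : ℕ) < 17 <;>
      simp only [dropFun, dif_pos, dif_neg, h', Prod.fst_mul, Prod.fst_inv, Prod.snd_mul,
        Prod.snd_inv, toAdd_mul, toAdd_inv, toAdd_ofAdd, toAdd_one, Pi.add_apply, Pi.neg_apply,
        Pi.zero_apply, Pi.single_apply, Fin.ext_iff, h17] <;>
      split_ifs <;> first | omega | simp_all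

lemma single_zsmul (j : Fin 34) (n : ℤ) : n • (Pi.single j 1 : Fin 34 → ℤ) = Pi.single j n := by
  funext t
  rcases eq_or_ne t j with rfl | h
  · simp
  · simp [Pi.single_eq_of_ne h]

lemma sHom_apply (p : Ab2) : sHom p
    = Multiplicative.ofAdd (∑ i, Multiplicative.toAdd p.1 i, ∑ i, Multiplicative.toAdd p.2 i) := rfl

def psiH (ab : Hgrp →* Multiplicative (ℤ × ℤ)) : ↥ab.ker →* Multiplicative (Fin 34 → ℤ) :=
  dropHom.comp (qH.comp ab.ker.subtype)

section
variable (ab : Hgrp →* Multiplicative (ℤ × ℤ))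
    (habx : ∀ i : Fin 18, ab (xH i) = Multiplicative.ofAdd (1, 0))
    (haby : ∀ i : Fin 18, ab (yH i) = Multiplicative.ofAdd (0, 1))
    (habz : ab zH = 1)

include habx haby habz in
lemma ab_eq (h : Hgrp) : sHom (qH h) = ab h := by
  have : h ∈ MonoidHom.eqLocus (sHom.comp qH) ab := by
    apply PresentedGroup.generated_by
    intro g
    show (sHom.comp qH) (PresentedGroup.of g) = ab (PresentedGroup.of g)
    cases g with
    | x i =>
      rw [MonoidHom.comp_apply, show PresentedGroup.of (HGen.x i) = xH i from rfl, qH_x, habx i,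
        sHom_apply]
      simp [Finset.sum_pi_single']
    | y i =>
      rw [MonoidHom.comp_apply, show PresentedGroup.of (HGen.y i) = yH i from rfl, qH_y, haby i,
        sHom_apply]
      simp [Finset.sum_pi_single']
    | z =>
      rw [MonoidHom.comp_apply, show PresentedGroup.of HGen.z = zH from rfl, qH_z, habz, map_one]
  exact this

include habx haby in
lemma genH_mem (j : Fin 34) : genH j ∈ ab.ker := by
  rw [MonoidHom.mem_ker, genH]
  split_ifs with h
  · rw [map_mul, map_inv, habx, habx]
    simp
  · rw [map_mul, map_inv, haby, haby]
    simp

include habx haby in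
lemma psi_surj : Function.Surjective (psiH ab) := by
  intro v
  have hmem : v ∈ (psiH ab).range := by
    have hv : v = ∏ j : Fin 34, Multiplicative.ofAdd (Pi.single j (Multiplicative.toAdd v j)) := by
      calc v = Multiplicative.ofAdd (Multiplicative.toAdd v) := (ofAdd_toAdd v).symm
        _ = Multiplicative.ofAdd (∑ j, Pi.single j (Multiplicative.toAdd v j)) := by
            rw [Finset.univ_sum_single]
        _ = ∏ j, Multiplicative.ofAdd (Pi.single j (Multiplicative.toAdd v j)) := ofAdd_sum _ _
    rw [hv]
    refine Subgroup.prod_mem _ fun j _ => ?_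
    have hpg : psiH ab ⟨genH j, genH_mem ab habx haby j⟩ = Multiplicative.ofAdd (Pi.single j 1) :=
      drop_gen j
    have : Multiplicative.ofAdd (Pi.single j (Multiplicative.toAdd v j))
        = psiH ab (⟨genH j, genH_mem ab habx haby j⟩ ^ Multiplicative.toAdd v j) := by
      rw [map_zpow, hpg, ← ofAdd_zsmul, single_zsmul]
    rw [this]
    exact ⟨_, rfl⟩
  exact MonoidHom.mem_range.mp hmem

include habx haby habz in
set_option maxHeartbeats 1000000 in
lemma psi_ker : (psiH ab).ker
    = Subgroup.normalClosure {(⟨zH, MonoidHom.mem_ker.mpr habz⟩ : ↥ab.ker)} := by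
  apply le_antisymm
  · intro k hk
    obtain ⟨a, b, c, heq, hq⟩ := normal_form (k : Hgrp)
    have hk' : dropHom (qH (k : Hgrp)) = 1 := hk
    rw [hq, dropHom_apply] at hk'
    have hfun : dropFun (Multiplicative.ofAdd a, Multiplicative.ofAdd b) = 0 := by
      have := congrArg Multiplicative.toAdd hk'
      simpa using this
    have ha : ∀ i : Fin 18, i ≠ 17 → a i = 0 := by
      intro i hi
      have hival : (i : ℕ) ≠ 17 := fun hh => hi (Fin.ext (by simpa using hh))
      have hilt : (i : ℕ) < 17 := by have := i.isLt; omega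
      have := congrFun hfun ⟨(i : ℕ), by omega⟩
      simpa [dropFun, hilt] using this
    have hb : ∀ i : Fin 18, i ≠ 17 → b i = 0 := by
      intro i hi
      have hival : (i : ℕ) ≠ 17 := fun hh => hi (Fin.ext (by simpa using hh))
      have := congrFun hfun ⟨(i : ℕ) + 17, by have := i.isLt; omega⟩
      simpa [dropFun] using this
    have hsum : sHom (qH (k : Hgrp)) = 1 := by
      rw [ab_eq ab habx haby habz]
      exact k.2
    rw [hq, sHom_apply] at hsum
    have hsum' : (∑ i, a i) = 0 ∧ (∑ i, b i) = 0 := by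
      have := congrArg Multiplicative.toAdd hsum
      simpa [Prod.ext_iff] using this
    have ha17 : a 17 = 0 := by
      have h1 : ∑ i, a i = a 17 :=
        Finset.sum_eq_single 17 (fun i _ hi => ha i hi) (by simp)
      rw [h1] at hsum'
      exact hsum'.1
    have hb17 : b 17 = 0 := by
      have h1 : ∑ i, b i = b 17 :=
        Finset.sum_eq_single 17 (fun i _ hi => hb i hi) (by simp)
      rw [h1] at hsum'
      exact hsum'.2
    have haz : a = 0 := by
      funext i
      rcases eq_or_ne i 17 with rfl | hi
      · exact ha17
      · exact ha i hi
    have hbz : b = 0 := by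
      funext i
      rcases eq_or_ne i 17 with rfl | hi
      · exact hb17
      · exact hb i hi
    have hkz : k = (⟨zH, MonoidHom.mem_ker.mpr habz⟩ : ↥ab.ker) ^ c := by
      apply Subtype.ext
      rw [SubgroupClass.coe_zpow, heq, haz, hbz, Xa_zero, Ya_zero, mul_one, mul_one]
    rw [hkz]
    exact Subgroup.zpow_mem _ (Subgroup.subset_normalClosure (Set.mem_singleton _)) c
  · apply Subgroup.normalClosure_le_normal
    intro w hw
    rw [Set.mem_singleton_iff] at hw
    subst hw
    show dropHom (qH zH) = 1
    rw [qH_z, map_one]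

end

theorem stmt11 (ab : Hgrp →* Multiplicative (ℤ × ℤ))
    (habx : ∀ i : Fin 18, ab (xH i) = Multiplicative.ofAdd (1, 0))
    (haby : ∀ i : Fin 18, ab (yH i) = Multiplicative.ofAdd (0, 1))
    (habz : ab zH = 1) :
    ∃ hzK : zH ∈ ab.ker,
      (∀ k : Hgrp, k ∈ ab.ker → zH * k = k * zH) ∧
      Nonempty ((↥ab.ker ⧸ Subgroup.normalClosure {(⟨zH, hzK⟩ : ↥ab.ker)})
        ≃* Multiplicative (Fin 34 → ℤ)) := by
  refine ⟨MonoidHom.mem_ker.mpr habz, fun k _ => z_commute k, ?_⟩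
  exact ⟨(QuotientGroup.quotientMulEquivOfEq (psi_ker ab habx haby habz).symm).trans
    (QuotientGroup.quotientKerEquivOfSurjective (psiH ab) (psi_surj ab habx haby))⟩
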